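/- arXiv:2104.11332 — 4 statements merged into one kernel-verified Lean document; each statement's English description precedes it below -/
import Mathlib

section
/- If ξ₁, ξ₂ : ℝ → ℝ are differentiable functions satisfying ξ̇ᵢ(t) + α(ξᵢ(t)) ≥ 0 for i = 1,2 with α monotone increasing, then h(t) = min(ξ₁(t), ξ₂(t)) satisfies the barrier condition in the lower Dini derivative sense: D⁻h(t) + α(h(t)) ≥ 0 for all t. -/
open Filter

/-- Lower (right) Dini derivative. -/
noncomputable def lowerDini (h : ℝ → ℝ) (t : ℝ) : ℝ :=
  liminf (fun s => (h (t + s) - h t) / s) (nhdsWithin 0 (Set.Ioi 0))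

lemma tendsto_shift_ne (t : ℝ) :
    Tendsto (fun s : ℝ => t + s) (nhdsWithin 0 (Set.Ioi 0)) (nhdsWithin t {t}ᶜ) := by
  rw [tendsto_nhdsWithin_iff]
  constructor
  · have : Tendsto (fun s : ℝ => t + s) (nhds 0) (nhds (t + 0)) :=
      (continuous_const.add continuous_id).tendsto 0
    simpa using this.mono_left nhdsWithin_le_nhds
  · filter_upwards [self_mem_nhdsWithin] with s hs
    simp only [Set.mem_compl_iff, Set.mem_singleton_iff]
    intro h
    exact absurd (add_eq_left.mp h) (ne_of_gt hs)

lemma tendsto_quot (f : ℝ → ℝ) (t : ℝ) (hf : DifferentiableAt ℝ f t) :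
    Tendsto (fun s => (f (t + s) - f t) / s) (nhdsWithin 0 (Set.Ioi 0)) (nhds (deriv f t)) := by
  have h := hf.hasDerivAt
  rw [hasDerivAt_iff_tendsto_slope] at h
  have := h.comp (tendsto_shift_ne t)
  refine this.congr fun s => ?_
  simp [slope, Function.comp, div_eq_inv_mul]

/-- If `ξ₁, ξ₂ : ℝ → ℝ` are differentiable and satisfy
`ξ̇ᵢ(t) + α(ξᵢ(t)) ≥ 0` with `α` monotone increasing, then
`h(t) = min(ξ₁(t), ξ₂(t))` satisfies `D⁻h(t) + α(h(t)) ≥ 0` for all `t`. -/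
theorem min_barrier_dini (ξ₁ ξ₂ : ℝ → ℝ)
    (hξ₁ : Differentiable ℝ ξ₁) (hξ₂ : Differentiable ℝ ξ₂)
    (α : ℝ → ℝ) (hα : Monotone α)
    (h₁ : ∀ t, deriv ξ₁ t + α (ξ₁ t) ≥ 0)
    (h₂ : ∀ t, deriv ξ₂ t + α (ξ₂ t) ≥ 0) :
    ∀ t, lowerDini (fun s => min (ξ₁ s) (ξ₂ s)) t + α (min (ξ₁ t) (ξ₂ t)) ≥ 0 := by
  intro t
  have hq₁ := tendsto_quot ξ₁ t (hξ₁ t)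
  have hq₂ := tendsto_quot ξ₂ t (hξ₂ t)
  rcases lt_trichotomy (ξ₁ t) (ξ₂ t) with hlt | heq | hgt
  · -- eventually min = ξ₁
    have hev : ∀ᶠ s in nhdsWithin (0:ℝ) (Set.Ioi 0),
        (min (ξ₁ (t + s)) (ξ₂ (t + s)) - min (ξ₁ t) (ξ₂ t)) / s
          = (ξ₁ (t + s) - ξ₁ t) / s := by
      have hc : Tendsto (fun s : ℝ => ξ₂ (t + s) - ξ₁ (t + s)) (nhdsWithin 0 (Set.Ioi 0))
          (nhds (ξ₂ t - ξ₁ t)) := by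
        have : ContinuousAt (fun s : ℝ => ξ₂ (t + s) - ξ₁ (t + s)) 0 :=
          ((hξ₂.continuous.comp (continuous_const.add continuous_id)).sub
            (hξ₁.continuous.comp (continuous_const.add continuous_id))).continuousAt
        simpa using this.continuousWithinAt.tendsto
      have hpos := hc.eventually (eventually_gt_nhds (by linarith : (0:ℝ) < ξ₂ t - ξ₁ t))
      filter_upwards [hpos] with s hs
      rw [min_eq_left (by linarith : ξ₁ (t + s) ≤ ξ₂ (t + s)),
        min_eq_left hlt.le]
    have hlim : lowerDini (fun s => min (ξ₁ s) (ξ₂ s)) t = deriv ξ₁ t := by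
      unfold lowerDini
      exact (hq₁.congr' (hev.mono fun s hs => hs.symm)).liminf_eq
    rw [hlim, min_eq_left hlt.le]
    exact h₁ t
  · have hlim : lowerDini (fun s => min (ξ₁ s) (ξ₂ s)) t
        = min (deriv ξ₁ t) (deriv ξ₂ t) := by
      unfold lowerDini
      have : Tendsto (fun s => (min (ξ₁ (t + s)) (ξ₂ (t + s)) - min (ξ₁ t) (ξ₂ t)) / s)
          (nhdsWithin 0 (Set.Ioi 0)) (nhds (min (deriv ξ₁ t) (deriv ξ₂ t))) := by
        have := hq₁.min hq₂
        refine this.congr' ?_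
        filter_upwards [self_mem_nhdsWithin] with s hs
        have hs' : (0:ℝ) < s := hs
        rw [min_eq_left heq.le, ← heq, min_div_div_right hs'.le, min_sub_sub_right]
      exact this.liminf_eq
    rw [hlim]
    rcases min_cases (deriv ξ₁ t) (deriv ξ₂ t) with ⟨h, _⟩ | ⟨h, _⟩ <;> rw [h]
    · rw [min_eq_left heq.le]; exact h₁ t
    · rw [min_eq_left heq.le, heq]; exact h₂ t
  · -- eventually min = ξ₂
    have hev : ∀ᶠ s in nhdsWithin (0:ℝ) (Set.Ioi 0),
        (min (ξ₁ (t + s)) (ξ₂ (t + s)) - min (ξ₁ t) (ξ₂ t)) / s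
          = (ξ₂ (t + s) - ξ₂ t) / s := by
      have hc : Tendsto (fun s : ℝ => ξ₁ (t + s) - ξ₂ (t + s)) (nhdsWithin 0 (Set.Ioi 0))
          (nhds (ξ₁ t - ξ₂ t)) := by
        have : ContinuousAt (fun s : ℝ => ξ₁ (t + s) - ξ₂ (t + s)) 0 :=
          ((hξ₁.continuous.comp (continuous_const.add continuous_id)).sub
            (hξ₂.continuous.comp (continuous_const.add continuous_id))).continuousAt
        simpa using this.continuousWithinAt.tendsto
      have hpos := hc.eventually (eventually_gt_nhds (by linarith : (0:ℝ) < ξ₁ t - ξ₂ t))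
      filter_upwards [hpos] with s hs
      rw [min_eq_right (by linarith : ξ₂ (t + s) ≤ ξ₁ (t + s)),
        min_eq_right hgt.le]
    have hlim : lowerDini (fun s => min (ξ₁ s) (ξ₂ s)) t = deriv ξ₂ t := by
      unfold lowerDini
      exact (hq₂.congr' (hev.mono fun s hs => hs.symm)).liminf_eq
    rw [hlim, min_eq_right hgt.le]
    exact h₂ t
end

section
/- For the double integrator with u ∈ [−u_max, u_max], the set {(s,v) : h(s,v) ≥ 0} with h(s,v) = C − s − max(v,0)²/(2 u_max) is exactly the maximal set of initial conditions from which the constraint s(t) ≤ C can be satisfied for all t ≥ 0: if h(s₀,v₀) < 0 (with v₀ > 0), then every admissible trajectory from (s₀,v₀) violates s ≤ C at some time. -/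
/-- For the double integrator with `u ∈ [−u_max, u_max]`, the set
`{h ≥ 0}` with `h(s,v) = C − s − max(v,0)²/(2 u_max)` is the maximal set of
initial conditions from which `s(t) ≤ C` can be maintained: if `h(s₀,v₀) < 0`
(with `v₀ > 0`), then every admissible trajectory from `(s₀,v₀)` violates
`s ≤ C` at some time. -/
theorem double_integrator_maximality (umax C : ℝ) (humax : 0 < umax)
    (s v u : ℝ → ℝ)
    (hu : ∀ t, |u t| ≤ umax)
    (hs : ∀ t, HasDerivAt s (v t) t)
    (hv : ∀ t, HasDerivAt v (u t) t)
    (hv0 : 0 < v 0)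
    (hh0 : C - s 0 - (max (v 0) 0) ^ 2 / (2 * umax) < 0) :
    ∃ t ≥ (0:ℝ), s t > C := by
  set T : ℝ := v 0 / umax with hT
  have hT0 : 0 ≤ T := (div_pos hv0 humax).le
  -- step 1: v t ≥ v 0 - umax * t for t ≥ 0
  have hg : ∀ t : ℝ, HasDerivAt (fun t => v t + umax * t) (u t + umax) t := by
    intro t
    have h1 : HasDerivAt (fun t : ℝ => umax * t) umax t := by
      simpa using (hasDerivAt_id t).const_mul umax
    exact (hv t).add h1
  have hgmono : Monotone (fun t => v t + umax * t) := by
    apply monotone_of_deriv_nonneg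
    · exact fun t => ((hg t).differentiableAt)
    · intro t
      rw [(hg t).deriv]
      have := (abs_le.mp (hu t)).1
      linarith
  have hvlb : ∀ t : ℝ, 0 ≤ t → v 0 - umax * t ≤ v t := by
    intro t ht
    have := hgmono ht
    simp only [mul_zero, add_zero] at this
    linarith
  -- step 2
  have hf : ∀ t : ℝ, HasDerivAt (fun t => s t - v 0 * t + umax * t ^ 2 / 2)
      (v t - v 0 + umax * t) t := by
    intro t
    have h1 : HasDerivAt (fun t : ℝ => v 0 * t) (v 0) t := by
      simpa using (hasDerivAt_id t).const_mul (v 0)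
    have h2 : HasDerivAt (fun t : ℝ => umax * t ^ 2 / 2) (umax * t) t := by
      have := ((hasDerivAt_pow 2 t).const_mul umax).div_const 2
      convert this using 1
      · rfl
      · rfl
      · norm_num
        ring
    exact ((hs t).sub h1).add h2
  have hfmono : MonotoneOn (fun t => s t - v 0 * t + umax * t ^ 2 / 2) (Set.Ici 0) := by
    apply monotoneOn_of_deriv_nonneg (convex_Ici 0)
    · exact fun t _ => (hf t).differentiableAt.continuousAt.continuousWithinAt
    · intro t ht
      exact ((hf t).differentiableAt).differentiableWithinAt
    · intro t ht
      rw [interior_Ici] at ht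
      rw [(hf t).deriv]
      have := hvlb t ht.le
      linarith
  refine ⟨T, hT0, ?_⟩
  have hkey := hfmono Set.self_mem_Ici (Set.mem_Ici.mpr hT0) hT0
  simp only [mul_zero, add_zero, zero_pow, ne_eq, OfNat.ofNat_ne_zero,
    not_false_eq_true, zero_div, sub_zero] at hkey
  have hmax : max (v 0) 0 = v 0 := max_eq_left hv0.le
  rw [hmax] at hh0
  have heq : v 0 * T - umax * T ^ 2 / 2 = v 0 ^ 2 / (2 * umax) := by
    rw [hT]; field_simp; ring
  have h2 : C - s 0 < v 0 ^ 2 / (2 * umax) := by linarith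
  -- hkey : s 0 ≤ s T - v 0 * T + umax * T ^ 2 / 2
  nlinarith [hkey, heq, h2]
end

section
/- If the backup policy π keeps S₀ invariant and satisfies ∇h_S(x)·f_π(x) + α(h_S(x)) ≥ 0 on S₀, then whenever h(x(t)) ≥ 0, the choice u = π(x(t)) satisfies all the backup-CBF QP constraints: for every τ ∈ [t, t+T], d/dt[h_C(Φ(x(t), τ−t))] = 0 ≥ −α(h_C(Φ(x(t),τ−t))), and d/dt[h_S(Φ(x(t), T))] + α(h_S(Φ(x(t),T))) ≥ 0. -/
/-- If the backup policy `π` keeps `S₀` invariant and satisfies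
`∇h_S·f_π + α(h_S) ≥ 0` on `S₀`, then whenever `h(x(t)) ≥ 0` (for the backup
CBF `h`), the choice `u = π(x(t))` satisfies all backup-CBF QP constraints:
for every `τ ∈ [t, t+T]`, `d/dt[h_C(Φ(x(t), τ−t))] = 0 ≥ −α(h_C(Φ(x(t),τ−t)))`,
and `d/dt[h_S(Φ(x(t), T))] + α(h_S(Φ(x(t),T))) ≥ 0`. -/
theorem backup_policy_feasible {n m : ℕ}
    (f : EuclideanSpace ℝ (Fin n) → EuclideanSpace ℝ (Fin n))
    (g : EuclideanSpace ℝ (Fin n) → (Fin m → ℝ) → EuclideanSpace ℝ (Fin n))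
    (U : Set (Fin m → ℝ))
    (π : EuclideanSpace ℝ (Fin n) → (Fin m → ℝ)) (hπU : ∀ y, π y ∈ U)
    (Φ : EuclideanSpace ℝ (Fin n) → ℝ → EuclideanSpace ℝ (Fin n))
    (hΦ0 : ∀ y, Φ y 0 = y)
    (hΦadd : ∀ y a b, Φ (Φ y a) b = Φ y (a + b))
    (hΦC1 : ContDiff ℝ 1 (fun p : EuclideanSpace ℝ (Fin n) × ℝ => Φ p.1 p.2))
    (hflow : ∀ y t, HasDerivAt (Φ y) (f (Φ y t) + g (Φ y t) (π (Φ y t))) t)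
    (hC hS : EuclideanSpace ℝ (Fin n) → ℝ)
    (hCd : ContDiff ℝ 1 hC) (hSd : ContDiff ℝ 1 hS)
    (α : ℝ → ℝ) (hαmono : StrictMono α) (hα0 : α 0 = 0)
    (S₀ : Set (EuclideanSpace ℝ (Fin n))) (hS₀def : S₀ = {y | 0 ≤ hS y})
    (hS₀inv : ∀ y ∈ S₀, ∀ t ≥ (0:ℝ), Φ y t ∈ S₀)
    (hS₀cbf : ∀ y ∈ S₀, fderiv ℝ hS y (f y + g y (π y)) + α (hS y) ≥ 0)
    (T : ℝ) (hT : 0 < T)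
    (x : ℝ → EuclideanSpace ℝ (Fin n))
    (hx : ∀ t, HasDerivAt x (f (x t) + g (x t) (π (x t))) t)
    (t : ℝ)
    (hh : 0 ≤ min (⨅ τ : Set.Icc (0:ℝ) T, hC (Φ (x t) τ)) (hS (Φ (x t) T))) :
    (∀ τ ∈ Set.Icc t (t + T),
        HasDerivAt (fun s => hC (Φ (x s) (τ - s))) 0 t ∧
        (0:ℝ) ≥ -α (hC (Φ (x t) (τ - t)))) ∧
    ∃ d : ℝ, HasDerivAt (fun s => hS (Φ (x s) T)) d t ∧
        d + α (hS (Φ (x t) T)) ≥ 0 := by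
  classical
  set fπ : EuclideanSpace ℝ (Fin n) → EuclideanSpace ℝ (Fin n) :=
    fun y => f y + g y (π y) with hfπ
  set F : EuclideanSpace ℝ (Fin n) × ℝ → EuclideanSpace ℝ (Fin n) :=
    fun p => Φ p.1 p.2 with hFdef
  have hF : ∀ p, HasFDerivAt F (fderiv ℝ F p) p :=
    fun p => (hΦC1.differentiable one_ne_zero p).hasFDerivAt
  -- the curve s ↦ Φ (x t) (s - t) has derivative fπ (x t) at t
  have h1 : HasDerivAt (fun s => Φ (x t) (s - t)) (fπ (x t)) t := by
    have hg1 : HasDerivAt (Φ (x t)) (fπ (x t)) (t - t) := by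
      rw [sub_self]
      simpa [hΦ0] using hflow (x t) 0
    have hh1 : HasDerivAt (fun s : ℝ => s - t) 1 t := (hasDerivAt_id t).sub_const t
    simpa [Function.comp_def] using HasDerivAt.scomp (h := fun s : ℝ => s - t) t hg1 hh1
  constructor
  · intro τ hτ
    obtain ⟨hτ1, hτ2⟩ := hτ
    have hr : τ - t ∈ Set.Icc (0:ℝ) T := ⟨by linarith, by linarith⟩
    have hneg : HasDerivAt (fun s : ℝ => τ - s) (-1) t := by
      simpa using (hasDerivAt_id t).const_sub τ
    -- chain rule along the frozen curve
    have curve2 : HasDerivAt (fun s => (Φ (x t) (s - t), τ - s)) (fπ (x t), -1) t :=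
      h1.prodMk hneg
    have hF2 : HasFDerivAt F (fderiv ℝ F (x t, τ - t)) (Φ (x t) (t - t), τ - t) := by
      rw [sub_self, hΦ0]; exact hF _
    have comp2 : HasDerivAt (fun s => Φ (Φ (x t) (s - t)) (τ - s))
        (fderiv ℝ F (x t, τ - t) (fπ (x t), -1)) t :=
      by have := hF2.comp_hasDerivAt t curve2; exact this
    have hconst : (fun s => Φ (Φ (x t) (s - t)) (τ - s)) = fun _ => Φ (x t) (τ - t) := by
      funext s
      rw [hΦadd]
      congr 1
      ring
    have hzero : fderiv ℝ F (x t, τ - t) (fπ (x t), -1) = 0 := by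
      rw [hconst] at comp2
      exact comp2.unique (hasDerivAt_const t _)
    have curve1 : HasDerivAt (fun s => (x s, τ - s)) (fπ (x t), -1) t :=
      (hx t).prodMk hneg
    have key : HasDerivAt (fun s => Φ (x s) (τ - s)) 0 t := by
      have := (hF (x t, τ - t)).comp_hasDerivAt t curve1
      rwa [hzero] at this
    have hCder : HasDerivAt (fun s => hC (Φ (x s) (τ - s))) 0 t := by
      have := ((hCd.differentiable one_ne_zero (Φ (x t) (τ - t))).hasFDerivAt).comp_hasDerivAt t key
      simpa [Function.comp_def] using this
    refine ⟨hCder, ?_⟩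
    -- nonnegativity of hC along the backup flow
    have hcont : Continuous fun r : ℝ => hC (Φ (x t) r) := by
      have : Continuous fun r : ℝ => Φ (x t) r :=
        hΦC1.continuous.comp (continuous_const.prodMk continuous_id)
      exact hCd.continuous.comp this
    have hbdd : BddBelow (Set.range fun τ' : Set.Icc (0:ℝ) T => hC (Φ (x t) τ')) := by
      have : (Set.range fun τ' : Set.Icc (0:ℝ) T => hC (Φ (x t) τ')) =
          (fun r => hC (Φ (x t) r)) '' Set.Icc 0 T := by
        ext y
        constructor
        · rintro ⟨⟨a, ha⟩, rfl⟩; exact ⟨a, ha, rfl⟩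
        · rintro ⟨a, ha, rfl⟩; exact ⟨⟨a, ha⟩, rfl⟩
      rw [this]
      exact (isCompact_Icc.image hcont).bddBelow
    have hle : (⨅ τ' : Set.Icc (0:ℝ) T, hC (Φ (x t) τ')) ≤ hC (Φ (x t) (τ - t)) :=
      ciInf_le hbdd ⟨τ - t, hr⟩
    have h0 : (0:ℝ) ≤ hC (Φ (x t) (τ - t)) :=
      le_trans (le_trans hh (min_le_left _ _)) hle
    have := hαmono.monotone h0
    rw [hα0] at this
    linarith
  · -- terminal constraint
    have hS0 : (0:ℝ) ≤ hS (Φ (x t) T) := le_trans hh (min_le_right _ _)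
    have hmem : Φ (x t) T ∈ S₀ := by rw [hS₀def]; exact hS0
    have hTconst : HasDerivAt (fun _ : ℝ => T) 0 t := hasDerivAt_const t T
    have curve2 : HasDerivAt (fun s => (Φ (x t) (s - t), T)) (fπ (x t), 0) t :=
      h1.prodMk hTconst
    have hF2 : HasFDerivAt F (fderiv ℝ F (x t, T)) (Φ (x t) (t - t), T) := by
      rw [sub_self, hΦ0]; exact hF _
    have comp2 : HasDerivAt (fun s => Φ (Φ (x t) (s - t)) T)
        (fderiv ℝ F (x t, T) (fπ (x t), 0)) t :=
      by have := hF2.comp_hasDerivAt t curve2; exact this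
    have heq : (fun s => Φ (Φ (x t) (s - t)) T) = fun s => Φ (x t) (s - t + T) := by
      funext s; rw [hΦadd]
    have halt : HasDerivAt (fun s => Φ (x t) (s - t + T)) (fπ (Φ (x t) T)) t := by
      have hg1 : HasDerivAt (Φ (x t)) (fπ (Φ (x t) T)) (t - t + T) := by
        rw [sub_self, zero_add]
        exact hflow (x t) T
      have hh1 : HasDerivAt (fun s : ℝ => s - t + T) 1 t := by
        simpa using ((hasDerivAt_id t).sub_const t).add_const T
      simpa [Function.comp_def] using HasDerivAt.scomp (h := fun s : ℝ => s - t + T) t hg1 hh1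
    have hval : fderiv ℝ F (x t, T) (fπ (x t), 0) = fπ (Φ (x t) T) := by
      rw [heq] at comp2
      exact comp2.unique halt
    have curve1 : HasDerivAt (fun s => (x s, T)) (fπ (x t), 0) t :=
      (hx t).prodMk hTconst
    have key : HasDerivAt (fun s => Φ (x s) T) (fπ (Φ (x t) T)) t := by
      have := (hF (x t, T)).comp_hasDerivAt t curve1
      rwa [hval] at this
    refine ⟨fderiv ℝ hS (Φ (x t) T) (fπ (Φ (x t) T)), ?_, ?_⟩
    · have := ((hSd.differentiable one_ne_zero (Φ (x t) T)).hasFDerivAt).comp_hasDerivAt t key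
      simpa [Function.comp_def] using this
    · exact hS₀cbf _ hmem
end

section
/- Let ξ̄ : ℝ × [t, t+T] → ℝ be C¹ and define ξ(s) = min_{τ ∈ [t,t+T]} ξ̄(s, τ). If for every τ ∈ [t, t+T], ∂ξ̄/∂s(s, τ) + α(ξ̄(s, τ)) ≥ 0 with α increasing, then the lower Dini derivative of ξ at s satisfies D⁻ξ(s) + α(ξ(s)) ≥ 0. -/
open Filter

/-- Let `ξ̄ : ℝ × [t, t+T] → ℝ` be C¹ and define
`ξ(s) = min_{τ ∈ [t,t+T]} ξ̄(s, τ)`. If for every `τ ∈ [t, t+T]`,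
`∂ξ̄/∂s(s, τ) + α(ξ̄(s, τ)) ≥ 0` with `α` increasing, then the lower Dini
derivative of `ξ` at `s` satisfies `D⁻ξ(s) + α(ξ(s)) ≥ 0`. -/
theorem min_over_horizon_dini (t T : ℝ) (hT : 0 ≤ T)
    (ξb : ℝ → ℝ → ℝ)
    (hξb : ContDiff ℝ 1 (fun p : ℝ × ℝ => ξb p.1 p.2))
    (α : ℝ → ℝ) (hα : Monotone α)
    (s : ℝ)
    (hcond : ∀ τ ∈ Set.Icc t (t + T),
      deriv (fun s' => ξb s' τ) s + α (ξb s τ) ≥ 0) :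
    lowerDini (fun s' => ⨅ τ : Set.Icc t (t + T), ξb s' τ) s +
      α (⨅ τ : Set.Icc t (t + T), ξb s τ) ≥ 0 := by
  set K := Set.Icc t (t + T) with hKdef
  have hKne : K.Nonempty := Set.nonempty_Icc.2 (by linarith)
  have hKcpt : IsCompact K := isCompact_Icc
  haveI : Nonempty K := hKne.to_subtype
  have hF : Continuous fun p : ℝ × ℝ => ξb p.1 p.2 := hξb.continuous
  have hcont : ∀ s' : ℝ, Continuous fun τ => ξb s' τ := fun s' =>
    hF.comp (continuous_const.prodMk continuous_id)
  have hdiff : Differentiable ℝ (fun p : ℝ × ℝ => ξb p.1 p.2) :=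
    hξb.differentiable one_ne_zero
  set D : ℝ → ℝ → ℝ :=
    fun σ τ => fderiv ℝ (fun p : ℝ × ℝ => ξb p.1 p.2) (σ, τ) (1, 0) with hDdef
  have hDeriv : ∀ σ τ, HasDerivAt (fun s' => ξb s' τ) (D σ τ) σ := by
    intro σ τ
    have h1 : HasDerivAt (fun s' : ℝ => (s', τ)) ((1 : ℝ), (0 : ℝ)) σ :=
      (hasDerivAt_id σ).prodMk (hasDerivAt_const σ τ)
    exact (hdiff (σ, τ)).hasFDerivAt.comp_hasDerivAt σ h1
  have hDcont : Continuous fun p : ℝ × ℝ => D p.1 p.2 := by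
    have h1 := hξb.continuous_fderiv one_ne_zero
    exact (h1.comp (Continuous.prodMk continuous_fst continuous_snd)).clm_apply
      continuous_const
  -- minimizers exist
  have hmin : ∀ s' : ℝ, ∃ τ' ∈ K, ∀ τ ∈ K, ξb s' τ' ≤ ξb s' τ := by
    intro s'
    obtain ⟨τ', hτ'K, hτ'⟩ := hKcpt.exists_isMinOn hKne (hcont s').continuousOn
    exact ⟨τ', hτ'K, fun τ hτ => hτ' hτ⟩
  have hiInf : ∀ s' : ℝ, ∀ τ' ∈ K, (∀ τ ∈ K, ξb s' τ' ≤ ξb s' τ) →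
      (⨅ τ : K, ξb s' τ) = ξb s' τ' := by
    intro s' τ' hτ'K hτ'
    apply le_antisymm
    · exact ciInf_le ⟨ξb s' τ', by rintro x ⟨τ, rfl⟩; exact hτ' τ τ.2⟩ (⟨τ', hτ'K⟩ : K)
    · exact le_ciInf fun τ => hτ' τ τ.2
  obtain ⟨τs, hτsK, hτs⟩ := hmin s
  set m := ξb s τs with hmdef
  have hinf_s : (⨅ τ : K, ξb s τ) = m := hiInf s τs hτsK hτs
  -- bound on D over the rectangle
  obtain ⟨C, hC⟩ := (isCompact_Icc.prod hKcpt).exists_bound_of_continuousOn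
    (s := Set.Icc s (s + 1) ×ˢ K) hDcont.continuousOn
  set L := max C 0 with hLdef
  have hL0 : 0 ≤ L := le_max_right _ _
  have hLbd : ∀ σ ∈ Set.Icc s (s + 1), ∀ τ ∈ K, |D σ τ| ≤ L := by
    intro σ hσ τ hτ
    have := hC (σ, τ) ⟨hσ, hτ⟩
    exact le_trans this (le_max_left _ _)
  -- mean value theorem helper
  have hMVT : ∀ τ : ℝ, ∀ h : ℝ, 0 < h → ∃ σ ∈ Set.Ioo s (s + h),
      ξb (s + h) τ - ξb s τ = D σ τ * h := by
    intro τ h hh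
    obtain ⟨σ, hσ, hEq⟩ := exists_hasDerivAt_eq_slope (fun s' => ξb s' τ)
      (fun σ => D σ τ) (by linarith : s < s + h)
      (fun x _ => (hDeriv x τ).continuousAt.continuousWithinAt)
      (fun x _ => hDeriv x τ)
    refine ⟨σ, hσ, ?_⟩
    have hsub : s + h - s = h := by ring
    rw [hsub] at hEq
    field_simp at hEq
    linarith [hEq]
  have hLip : ∀ τ ∈ K, ∀ h : ℝ, 0 < h → h ≤ 1 →
      |ξb (s + h) τ - ξb s τ| ≤ L * h := by
    intro τ hτ h hh h1
    obtain ⟨σ, hσ, hEq⟩ := hMVT τ h hh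
    have hσ' : σ ∈ Set.Icc s (s + 1) := ⟨hσ.1.le, by linarith [hσ.2]⟩
    have hDb := hLbd σ hσ' τ hτ
    calc |ξb (s + h) τ - ξb s τ| = |D σ τ| * |h| := by rw [hEq, abs_mul]
      _ ≤ L * h := by rw [abs_of_pos hh]; exact mul_le_mul_of_nonneg_right hDb hh.le
  set ξ : ℝ → ℝ := fun s' => ⨅ τ : K, ξb s' τ with hξdef
  have hξub : ∀ s' : ℝ, ∀ τ ∈ K, ξ s' ≤ ξb s' τ := by
    intro s' τ hτ
    obtain ⟨τ', hτ'K, hτ'⟩ := hmin s'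
    exact ciInf_le ⟨ξb s' τ', by rintro x ⟨τ'', rfl⟩; exact hτ' τ'' τ''.2⟩ (⟨τ, hτ⟩ : K)
  -- key eventual bound
  have key : ∀ ε : ℝ, 0 < ε → ∀ᶠ h in nhdsWithin 0 (Set.Ioi 0),
      -α m - ε ≤ (ξ (s + h) - ξ s) / h := by
    intro ε hε
    set S := {p : ℝ × ℝ | p ∈ Set.Icc s (s + 1) ×ˢ K ∧ D p.1 p.2 ≤ -α m - ε} with hSdef
    have hScpt : IsCompact S := by
      have : S = (Set.Icc s (s + 1) ×ˢ K) ∩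
          ((fun p : ℝ × ℝ => D p.1 p.2) ⁻¹' Set.Iic (-α m - ε)) := by
        ext p; simp [hSdef, Set.mem_inter_iff, and_comm]
      rw [this]
      exact (isCompact_Icc.prod hKcpt).inter_right (isClosed_Iic.preimage hDcont)
    set φ : ℝ × ℝ → ℝ := fun p => max (p.1 - s) (ξb s p.2 - m) with hφdef
    have hφcont : Continuous φ := by
      apply Continuous.max
      · exact (continuous_fst.sub continuous_const)
      · exact ((hcont s).comp continuous_snd).sub continuous_const
    have hφpos : ∀ p ∈ S, 0 < φ p := by
      rintro ⟨σ, τ⟩ ⟨⟨hσ, hτ⟩, hDp⟩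
      rcases lt_or_eq_of_le hσ.1 with hlt | heq
      · exact lt_max_of_lt_left (by simpa using sub_pos.2 hlt)
      · -- σ = s
        have hc := hcond τ hτ
        have hder : deriv (fun s' => ξb s' τ) s = D s τ := (hDeriv s τ).deriv
        rw [hder] at hc
        have hDs : D s τ ≤ -α m - ε := by rw [← heq] at hDp; exact hDp
        have hαgt : α m < α (ξb s τ) := by linarith
        have hne : m < ξb s τ := by
          by_contra hcon
          push_neg at hcon
          exact absurd (hα hcon) (not_le.2 hαgt)
        exact lt_max_of_lt_right (sub_pos.2 hne)
    -- positive lower bound δ on φ over S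
    obtain ⟨δ, hδpos, hδ⟩ : ∃ δ : ℝ, 0 < δ ∧ ∀ p ∈ S, δ ≤ φ p := by
      rcases S.eq_empty_or_nonempty with hSe | hSne
      · exact ⟨1, one_pos, by simp [hSe]⟩
      · obtain ⟨p₀, hp₀S, hp₀⟩ := hScpt.exists_isMinOn hSne hφcont.continuousOn
        exact ⟨φ p₀, hφpos p₀ hp₀S, fun p hp => hp₀ hp⟩
    set h₀ : ℝ := min 1 (δ / (2 * L + 1)) with hh₀def
    have hh₀pos : 0 < h₀ := lt_min one_pos (div_pos hδpos (by linarith))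
    filter_upwards [Ioo_mem_nhdsGT_of_mem (Set.mem_Ico.2 ⟨le_rfl, hh₀pos⟩)] with h hh
    obtain ⟨hh0, hhlt⟩ := hh
    have hh1 : h ≤ 1 := le_trans hhlt.le (min_le_left _ _)
    have hhδ : (2 * L + 1) * h < δ := by
      have := lt_of_lt_of_le hhlt (min_le_right _ _)
      calc (2 * L + 1) * h < (2 * L + 1) * (δ / (2 * L + 1)) := by
            apply mul_lt_mul_of_pos_left this (by linarith)
        _ = δ := by field_simp
    obtain ⟨τh, hτhK, hτh⟩ := hmin (s + h)
    have hξsh : ξ (s + h) = ξb (s + h) τh := hiInf (s + h) τh hτhK hτh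
    -- ξb s τh ≤ m + 2 L h
    have hb1 : ξb s τh ≤ ξb (s + h) τh + L * h := by
      have := hLip τh hτhK h hh0 hh1
      have := abs_le.1 this
      linarith [this.1]
    have hb2 : ξb (s + h) τh ≤ ξb (s + h) τs := hτh τs hτsK
    have hb3 : ξb (s + h) τs ≤ m + L * h := by
      have := hLip τs hτsK h hh0 hh1
      have := abs_le.1 this
      linarith [this.2]
    have hclose : ξb s τh ≤ m + 2 * L * h := by linarith
    -- MVT at τh
    obtain ⟨σh, hσh, hEq⟩ := hMVT τh h hh0
    have hσh' : σh ∈ Set.Icc s (s + 1) := ⟨hσh.1.le, by linarith [hσh.2]⟩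
    have hnotS : (σh, τh) ∉ S := by
      intro hmem
      have hφb := hδ _ hmem
      have h1 : σh - s < δ := by
        have : σh - s < h := by linarith [hσh.2]
        nlinarith [hL0]
      have h2 : ξb s τh - m < δ := by nlinarith [hL0]
      have : φ (σh, τh) < δ := max_lt h1 h2
      linarith
    have hDgt : -α m - ε < D σh τh := by
      by_contra hcon
      push_neg at hcon
      exact hnotS ⟨⟨hσh', hτhK⟩, hcon⟩
    -- conclude
    have hξs : ξ s = m := hinf_s
    have hξs_le : ξ s ≤ ξb s τh := hξs ▸ hτs τh hτhK
    have hnum : (-α m - ε) * h ≤ ξ (s + h) - ξ s := by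
      rw [hξsh]
      calc (-α m - ε) * h ≤ D σh τh * h :=
            mul_le_mul_of_nonneg_right hDgt.le hh0.le
        _ = ξb (s + h) τh - ξb s τh := hEq.symm
        _ ≤ ξb (s + h) τh - ξ s := by linarith
    rw [le_div_iff₀ hh0]
    linarith
  -- eventual upper bound (for coboundedness)
  have hub : ∀ᶠ h in nhdsWithin 0 (Set.Ioi 0), (ξ (s + h) - ξ s) / h ≤ L := by
    filter_upwards [Ioo_mem_nhdsGT_of_mem (Set.mem_Ico.2 ⟨le_rfl, one_pos⟩)] with h hh
    obtain ⟨hh0, hh1⟩ := hh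
    have h1 : ξ (s + h) ≤ ξb (s + h) τs := hξub (s + h) τs hτsK
    have h2 : ξb (s + h) τs ≤ m + L * h := by
      have := abs_le.1 (hLip τs hτsK h hh0 hh1.le)
      linarith [this.2]
    have hξs : ξ s = m := hinf_s
    rw [div_le_iff₀ hh0, hξs]
    linarith
  -- put it together
  have hcob : IsCoboundedUnder (· ≥ ·) (nhdsWithin (0:ℝ) (Set.Ioi 0))
      (fun h => (ξ (s + h) - ξ s) / h) :=
    isCoboundedUnder_ge_of_eventually_le _ hub
  have hliminf : -α m ≤ lowerDini ξ s := by
    rw [lowerDini]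
    apply le_of_forall_sub_le
    intro ε hε
    exact le_liminf_of_le hcob (key ε hε)
  have hgoal : lowerDini ξ s + α (⨅ τ : K, ξb s τ) ≥ 0 := by
    rw [hinf_s]; linarith
  exact hgoal
end
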